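/- For any 0 < r < 1 and 0 < ε < 1-r, consider the 4×4 cross-holdings matrix C with C_{12} = 1-r-ε, C_{21} = 1-r, C_{32} = ε, all other entries 0, and let C̃ be the same except C̃_{32} = 0 and C̃_{42} = ε. With asset vector w = (0, v, 0, 0)ᵀ for v > 0 and Ĉ = Ĉ̃ = diag(r, r, 1, 1), the market valuations satisfy ‖Ĉ(I-C)^{-1}w - Ĉ̃(I-C̃)^{-1}w‖₁ ≥ (ε v)/(r(2-r) + (1-r)ε). -/

import Mathlib

open Matrix

/-- The explicit four-bank construction witnessing the sensitivity lower bound: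
moving a single holding of weight `ε` from `B₃` to `B₄` changes the market
valuations in ℓ1 norm by at least `εv / (r(2-r) + (1-r)ε)`. -/
theorem sensitivity_lower_bound (r ε v : ℝ)
    (hr0 : 0 < r) (hr1 : r < 1) (hε0 : 0 < ε) (hε1 : ε < 1 - r) (hv : 0 < v)
    (C Ct : Matrix (Fin 4) (Fin 4) ℝ)
    (hC : C = !![0, 1 - r - ε, 0, 0; 1 - r, 0, 0, 0; 0, ε, 0, 0; 0, 0, 0, 0])
    (hCt : Ct = !![0, 1 - r - ε, 0, 0; 1 - r, 0, 0, 0; 0, 0, 0, 0; 0, ε, 0, 0])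
    (Chat : Matrix (Fin 4) (Fin 4) ℝ)
    (hChat : Chat = Matrix.diagonal ![r, r, 1, 1])
    (w : Fin 4 → ℝ) (hw : w = ![0, v, 0, 0]) :
    ε * v / (r * (2 - r) + (1 - r) * ε) ≤
      ∑ i, |((Chat * (1 - C)⁻¹) *ᵥ w) i - ((Chat * (1 - Ct)⁻¹) *ᵥ w) i| := by
  set D : ℝ := r * (2 - r) + (1 - r) * ε with hD
  have hDpos : 0 < D := by
    have : 0 < r * (2 - r) := mul_pos hr0 (by linarith)
    have : 0 < (1 - r) * ε := mul_pos (by linarith) hε0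
    nlinarith
  have hDne : D ≠ 0 := ne_of_gt hDpos
  set M : Matrix (Fin 4) (Fin 4) ℝ :=
    D⁻¹ • !![1, 1 - r - ε, 0, 0; 1 - r, 1, 0, 0; ε * (1 - r), ε, D, 0; 0, 0, 0, D]
    with hM
  set Mt : Matrix (Fin 4) (Fin 4) ℝ :=
    D⁻¹ • !![1, 1 - r - ε, 0, 0; 1 - r, 1, 0, 0; 0, 0, D, 0; ε * (1 - r), ε, 0, D]
    with hMt
  have hinv : (1 - C)⁻¹ = M := by
    apply Matrix.inv_eq_right_inv
    subst hC
    ext i j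
    fin_cases i <;> fin_cases j <;>
      simp [hM, Matrix.mul_apply, Fin.sum_univ_four, Matrix.one_apply] <;>
      field_simp <;> ring
  have hinvt : (1 - Ct)⁻¹ = Mt := by
    apply Matrix.inv_eq_right_inv
    subst hCt
    ext i j
    fin_cases i <;> fin_cases j <;>
      simp [hMt, Matrix.mul_apply, Fin.sum_univ_four, Matrix.one_apply] <;>
      field_simp <;> ring
  rw [hinv, hinvt]
  subst hChat hw
  rw [Fin.sum_univ_four]
  have h0 : ∀ (k : Fin 4), ((Matrix.diagonal ![r, r, 1, 1] * M) *ᵥ ![0, v, 0, 0]) k =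
      (![r, r, 1, 1] k) * (M k 1) * v := by
    intro k
    simp [Matrix.mulVec, Matrix.mul_apply, dotProduct, Fin.sum_univ_four,
      Matrix.diagonal_apply]
    try fin_cases k <;> simp <;> ring
  have h0t : ∀ (k : Fin 4), ((Matrix.diagonal ![r, r, 1, 1] * Mt) *ᵥ ![0, v, 0, 0]) k =
      (![r, r, 1, 1] k) * (Mt k 1) * v := by
    intro k
    simp [Matrix.mulVec, Matrix.mul_apply, dotProduct, Fin.sum_univ_four,
      Matrix.diagonal_apply]
    try fin_cases k <;> simp <;> ring
  rw [h0 0, h0 1, h0 2, h0 3, h0t 0, h0t 1, h0t 2, h0t 3]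
  simp only [hM, hMt]
  simp [Matrix.smul_apply]
  have hεvD : 0 ≤ D⁻¹ * ε * v := by positivity
  rw [abs_of_pos hDpos, abs_of_pos hε0, abs_of_pos hv, div_eq_inv_mul, ← mul_assoc]
  linarith
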